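/- With X₁, X₂ and ε₀ as in the context, for every n ≥ 1 one has (X₁X₂)ⁿ + (X₂X₁)ⁿ = fₙ(ε₀)·I₂, where fₙ(z) = Σ_{k=0}^{⌊n/2⌋} (−1)ᵏ · (n/(n−k)) · C(n−k, k) · z^{n−2k} and C(·,·) denotes the binomial coefficient (note n − k > 0 for all 0 ≤ k ≤ ⌊n/2⌋ when n ≥ 1). -/
import Mathlib


/-- The matrix `X = [[t, s], [(1−t²)/s, −t]]`. -/
noncomputable def Xmat (t s : ℂ) : Matrix (Fin 2) (Fin 2) ℂ :=
  !![t, s; (1 - t ^ 2) / s, -t]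

/-- The scalar `ε₀ = 2t₁t₂ + s₁(1−t₂²)/s₂ + s₂(1−t₁²)/s₁`. -/
noncomputable def eps (t₁ s₁ t₂ s₂ : ℂ) : ℂ :=
  2 * t₁ * t₂ + s₁ * (1 - t₂ ^ 2) / s₂ + s₂ * (1 - t₁ ^ 2) / s₁

/-- The polynomial `fₙ(z) = Σ_{k=0}^{⌊n/2⌋} (−1)ᵏ (n/(n−k)) C(n−k, k) z^{n−2k}`. -/
noncomputable def f (n : ℕ) (z : ℂ) : ℂ :=
  ∑ k ∈ Finset.range (n / 2 + 1),
    (-1 : ℂ) ^ k * ((n : ℂ) / ((n - k : ℕ) : ℂ)) * ((n - k).choose k : ℂ) * z ^ (n - 2 * k)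

/-! ### Auxiliary lemmas -/

/-- The summand of `f`. -/
noncomputable def fTerm (n k : ℕ) (z : ℂ) : ℂ :=
  (-1 : ℂ) ^ k * ((n : ℂ) / ((n - k : ℕ) : ℂ)) * ((n - k).choose k : ℂ) * z ^ (n - 2 * k)

lemma f_eq_sum (n : ℕ) (z : ℂ) : f n z = ∑ k ∈ Finset.range (n / 2 + 1), fTerm n k z := rfl

lemma fTerm_zero (n k : ℕ) (h : n / 2 + 1 ≤ k) (z : ℂ) : fTerm n k z = 0 := by
  have : (n - k).choose k = 0 := Nat.choose_eq_zero_of_lt (by omega)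
  simp [fTerm, this]

lemma fext (n N : ℕ) (h : n / 2 + 1 ≤ N) (z : ℂ) :
    f n z = ∑ k ∈ Finset.range N, fTerm n k z := by
  rw [f_eq_sum]
  exact Finset.sum_subset (Finset.range_subset_range.mpr h)
    (fun k _ hk => fTerm_zero n k (by simpa using hk) z)

lemma choose_cast_id (m j : ℕ) :
    ((j : ℂ) + 1) * (((m + 1).choose (j + 1) : ℕ) : ℂ)
      = ((m : ℂ) + 1 - j) * (((m + 1).choose j : ℕ) : ℂ) := by
  rcases le_or_gt j (m + 1) with h | h
  · have hnat := Nat.choose_succ_right_eq (m + 1) j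
    have hc : (((m + 1).choose (j + 1) * (j + 1) : ℕ) : ℂ)
        = (((m + 1).choose j * (m + 1 - j) : ℕ) : ℂ) := by rw [hnat]
    push_cast [Nat.cast_sub h] at hc
    linear_combination hc
  · have h1 : (m + 1).choose j = 0 := Nat.choose_eq_zero_of_lt h
    have h2 : (m + 1).choose (j + 1) = 0 := Nat.choose_eq_zero_of_lt (by omega)
    simp [h1, h2]

lemma akey (m j : ℕ) :
    (-1:ℂ)^(j+1) * (((j+m+3:ℕ):ℂ) / ((m+2:ℕ):ℂ)) * (((m+2).choose (j+1) : ℕ) : ℂ)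
      = (-1:ℂ)^(j+1) * (((j+m+2:ℕ):ℂ) / ((m+1:ℕ):ℂ)) * (((m+1).choose (j+1) : ℕ) : ℂ)
        - (-1:ℂ)^j * (((j+m+1:ℕ):ℂ) / ((m+1:ℕ):ℂ)) * (((m+1).choose j : ℕ) : ℂ) := by
  have hp : ((m+2).choose (j+1) : ℕ) = (m+1).choose j + (m+1).choose (j+1) :=
    Nat.choose_succ_succ (m+1) j
  have hm1 : ((m:ℂ)+1) ≠ 0 := by
    have := Nat.cast_ne_zero (R := ℂ).mpr (show m+1 ≠ 0 by omega)
    push_cast at this; exact this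
  have hm2 : ((m:ℂ)+2) ≠ 0 := by
    have := Nat.cast_ne_zero (R := ℂ).mpr (show m+2 ≠ 0 by omega)
    push_cast at this; exact this
  rw [hp]
  push_cast
  field_simp
  linear_combination ((-1:ℂ)^j) * choose_cast_id m j

lemma fTerm_step (n k : ℕ) (hn : 1 ≤ n) (hk : k ≤ n / 2 + 1) (z : ℂ) :
    fTerm (n+2) k z = z * fTerm (n+1) k z - (if k = 0 then 0 else fTerm n (k-1) z) := by
  rcases k with _ | j
  · have h2 : ((n+2:ℕ):ℂ) ≠ 0 := Nat.cast_ne_zero.mpr (by omega)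
    have h1 : ((n+1:ℕ):ℂ) ≠ 0 := Nat.cast_ne_zero.mpr (by omega)
    simp only [fTerm, Nat.sub_zero, Nat.choose_zero_right, pow_zero, one_mul, Nat.cast_one,
      mul_one, if_pos rfl, Nat.mul_zero, sub_zero]
    rw [div_self h2, div_self h1]
    simp only [if_true]
    ring
  · have hjn : j + 1 ≤ n := by omega
    obtain ⟨m, rfl⟩ : ∃ m, n = j + m + 1 := ⟨n - j - 1, by omega⟩
    have hjm : j ≤ m + 1 := by omega
    simp only [fTerm, if_neg (Nat.succ_ne_zero j), Nat.succ_sub_one]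
    rw [show j+m+1+2 = j+m+3 by omega, show j+m+1+1 = j+m+2 by omega,
      show j+m+3-(j+1) = m+2 by omega, show j+m+2-(j+1) = m+1 by omega,
      show j+m+1-j = m+1 by omega, show j+m+3-2*(j+1) = m+1-j by omega,
      show j+m+2-2*(j+1) = m-j by omega, show j+m+1-2*j = m+1-j by omega]
    rcases le_or_gt j m with hj | hj
    · rw [show m+1-j = (m-j)+1 by omega, pow_succ]
      linear_combination (akey m j) * (z ^ (m-j) * z)
    · obtain rfl : j = m + 1 := by omega
      have hch : (m+1).choose (m+1+1) = 0 := Nat.choose_eq_zero_of_lt (by omega)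
      have hm1 : ((m:ℂ)+1) ≠ 0 := by
        have := Nat.cast_ne_zero (R := ℂ).mpr (show m+1 ≠ 0 by omega)
        push_cast at this; exact this
      have hm2 : ((m:ℂ)+2) ≠ 0 := by
        have := Nat.cast_ne_zero (R := ℂ).mpr (show m+2 ≠ 0 by omega)
        push_cast at this; exact this
      simp only [hch, Nat.sub_self, pow_zero, Nat.choose_self, Nat.cast_zero, Nat.cast_one,
        mul_one, mul_zero, zero_mul]
      push_cast
      field_simp
      ring

lemma frec (n : ℕ) (hn : 1 ≤ n) (z : ℂ) :
    f (n+2) z = z * f (n+1) z - f n z := by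
  rw [fext (n+2) (n/2+2) (by omega) z, fext (n+1) (n/2+2) (by omega) z, f_eq_sum n z,
    Finset.mul_sum]
  have key : ∀ k ∈ Finset.range (n/2+2),
      fTerm (n+2) k z = z * fTerm (n+1) k z - (if k = 0 then 0 else fTerm n (k-1) z) :=
    fun k hk => fTerm_step n k hn (by have := Finset.mem_range.mp hk; omega) z
  rw [Finset.sum_congr rfl key, Finset.sum_sub_distrib]
  congr 1
  rw [Finset.sum_range_succ' (fun k => if k = 0 then 0 else fTerm n (k-1) z) (n/2+1)]
  simp

lemma f_one (z : ℂ) : f 1 z = z := by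
  simp [f]

lemma f_two (z : ℂ) : f 2 z = z^2 - 2 := by
  rw [f, Finset.sum_range_succ, Finset.sum_range_one]
  norm_num
  ring

lemma Xsq (t s : ℂ) (hs : s ≠ 0) : Xmat t s * Xmat t s = 1 := by
  rw [Xmat, Matrix.mul_fin_two, Matrix.one_fin_two]
  congr 1 <;> field_simp <;> ring

lemma addAB (t₁ s₁ t₂ s₂ : ℂ) (hs₁ : s₁ ≠ 0) (hs₂ : s₂ ≠ 0) :
    Xmat t₁ s₁ * Xmat t₂ s₂ + Xmat t₂ s₂ * Xmat t₁ s₁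
      = eps t₁ s₁ t₂ s₂ • (1 : Matrix (Fin 2) (Fin 2) ℂ) := by
  ext i j
  fin_cases i <;> fin_cases j <;>
    simp only [Xmat, eps, Matrix.add_apply, Matrix.mul_apply, Fin.sum_univ_two,
      Matrix.smul_apply, Matrix.one_apply, Matrix.cons_val', Matrix.cons_val_zero,
      Matrix.cons_val_one, Matrix.head_cons, Matrix.head_fin_const, Matrix.empty_val',
      Matrix.cons_val_fin_one, smul_eq_mul] <;>
    (try norm_num) <;> (try field_simp) <;> ring

lemma main_aux (A B : Matrix (Fin 2) (Fin 2) ℂ) (e : ℂ) (hAB : A * B = 1) (hBA : B * A = 1)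
    (hsum : A + B = e • 1) : ∀ n : ℕ, A ^ (n+1) + B ^ (n+1) = f (n+1) e • 1 := by
  intro n
  induction n using Nat.twoStepInduction with
  | zero => simpa [f_one] using hsum
  | one =>
    have hexp : A ^ 2 + B ^ 2 = (A + B) * (A + B) - (A * B + B * A) := by
      rw [add_mul, mul_add, mul_add, pow_two, pow_two]
      abel
    have h2 : (1 + 1 : Matrix (Fin 2) (Fin 2) ℂ) = (2:ℂ) • 1 := by
      rw [show (2:ℂ) = (1:ℂ)+1 by norm_num, add_smul, one_smul]
    rw [hexp, hAB, hBA, hsum, f_two, Matrix.smul_mul, Matrix.mul_smul, one_mul, smul_smul,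
      sub_smul, h2, pow_two]
  | more n ih1 ih2 =>
    have hA : A * B ^ (n+2) = B ^ (n+1) := by
      rw [pow_succ' B (n+1), ← mul_assoc, hAB, one_mul]
    have hB : B * A ^ (n+2) = A ^ (n+1) := by
      rw [pow_succ' A (n+1), ← mul_assoc, hBA, one_mul]
    have hexp : A ^ (n+3) + B ^ (n+3)
        = (A + B) * (A ^ (n+2) + B ^ (n+2)) - (A * B ^ (n+2) + B * A ^ (n+2)) := by
      rw [add_mul, mul_add, mul_add, ← pow_succ' A (n+2), ← pow_succ' B (n+2)]
      abel
    have : (n + 2) + 1 = n + 3 := rfl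
    rw [show n+2+1 = n+3 from rfl, hexp, hA, hB, add_comm (B ^ (n+1)) (A ^ (n+1)), ih2, ih1, hsum,
      Matrix.smul_mul, Matrix.mul_smul, one_mul, smul_smul, ← sub_smul,
      frec (n+1) (by omega) e]

theorem pow_sum_eq_f_smul_one (t₁ s₁ t₂ s₂ : ℂ) (hs₁ : s₁ ≠ 0) (hs₂ : s₂ ≠ 0) :
    ∀ n : ℕ, 1 ≤ n →
      (Xmat t₁ s₁ * Xmat t₂ s₂) ^ n + (Xmat t₂ s₂ * Xmat t₁ s₁) ^ n =
        f n (eps t₁ s₁ t₂ s₂) • (1 : Matrix (Fin 2) (Fin 2) ℂ) := by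
  intro n hn
  obtain ⟨m, rfl⟩ : ∃ m, n = m + 1 := ⟨n - 1, by omega⟩
  have e1 := Xsq t₁ s₁ hs₁
  have e2 := Xsq t₂ s₂ hs₂
  have hAB : (Xmat t₁ s₁ * Xmat t₂ s₂) * (Xmat t₂ s₂ * Xmat t₁ s₁) = 1 := by
    rw [mul_assoc, ← mul_assoc (Xmat t₂ s₂), e2, one_mul, e1]
  have hBA : (Xmat t₂ s₂ * Xmat t₁ s₁) * (Xmat t₁ s₁ * Xmat t₂ s₂) = 1 := by
    rw [mul_assoc, ← mul_assoc (Xmat t₁ s₁), e1, one_mul, e2]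
  exact main_aux _ _ _ hAB hBA (addAB t₁ s₁ t₂ s₂ hs₁ hs₂) m
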